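/- The purity of a state ρ on a d_A-dimensional system is at most log d_A − H(ρ): for any unitary U : H_{A^n} → H_{A_p} ⊗ H_{A_g} such that σ = U ρ^{⊗n} U† has ‖σ^{A_p} − |0⟩⟨0|‖₁ ≤ ε, it holds that (1/n)·log dim H_{A_p} ≤ log d_A − H(ρ) + 1/(en) + ε·log d_A. -/

import Mathlib

open Matrix Kronecker BigOperators ComplexOrder

/-- Trace norm `‖A‖₁ = Tr √(Aᴴ A)`. -/
noncomputable def traceNorm {n : Type*} [Fintype n] [DecidableEq n]
    (A : Matrix n n ℂ) : ℝ :=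
  (((Matrix.isHermitian_conjTranspose_mul_self A).eigenvectorUnitary : Matrix n n ℂ) *
      Matrix.diagonal ((fun x : ℝ => (x : ℂ)) ∘ (Real.sqrt ∘ (Matrix.isHermitian_conjTranspose_mul_self A).eigenvalues)) *
      (star (Matrix.isHermitian_conjTranspose_mul_self A).eigenvectorUnitary : Matrix n n ℂ)).trace.re

/-- Von Neumann entropy (base 2), via eigenvalues; `0` for non-Hermitian input. -/
noncomputable def vnEntropy {n : Type*} [Fintype n] [DecidableEq n]
    (ρ : Matrix n n ℂ) : ℝ :=
  if h : ρ.IsHermitian then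
    -∑ i, (h.eigenvalues i) * Real.logb 2 (h.eigenvalues i)
  else 0

/-- A density operator: positive semidefinite with unit trace. -/
def IsDensity {n : Type*} [Fintype n] (ρ : Matrix n n ℂ) : Prop :=
  ρ.PosSemidef ∧ ρ.trace = 1

/-- Rank-one projector `|v⟩⟨v|`. -/
noncomputable def proj {n : Type*} (v : n → ℂ) : Matrix n n ℂ :=
  Matrix.vecMulVec v (star v)

/-- Partial trace over the second tensor factor. -/
noncomputable def ptraceSnd {a b : Type*} [Fintype b]
    (ρ : Matrix (a × b) (a × b) ℂ) : Matrix a a ℂ :=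
  Matrix.of fun i j => ∑ k, ρ (i, k) (j, k)

/-- Partial trace over the first tensor factor. -/
noncomputable def ptraceFst {a b : Type*} [Fintype a]
    (ρ : Matrix (a × b) (a × b) ℂ) : Matrix b b ℂ :=
  Matrix.of fun i j => ∑ k, ρ (k, i) (k, j)

/-- Quantum mutual information `I(A;B) = H(A) + H(B) − H(AB)`. -/
noncomputable def mutualInfo {a b : Type*} [Fintype a] [Fintype b]
    [DecidableEq a] [DecidableEq b] (ρ : Matrix (a × b) (a × b) ℂ) : ℝ :=
  vnEntropy (ptraceSnd ρ) + vnEntropy (ptraceFst ρ) - vnEntropy ρ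

/-- `n`-fold tensor power of a matrix. -/
noncomputable def tpow {d : ℕ} (ρ : Matrix (Fin d) (Fin d) ℂ) (n : ℕ) :
    Matrix (Fin n → Fin d) (Fin n → Fin d) ℂ :=
  Matrix.of fun f g => ∏ i, ρ (f i) (g i)

/-- The cq state obtained by measuring the `A` part of a bipartite state with POVM `Λ`:
`ρ^{XB} = Σ_x |x⟩⟨x| ⊗ Tr_A((Λ_x ⊗ I)ρ)`. -/
noncomputable def measureA {a b m : Type*} [Fintype a] [DecidableEq m]
    (Λ : m → Matrix a a ℂ) (ρ : Matrix (a × b) (a × b) ℂ) :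
    Matrix (m × b) (m × b) ℂ :=
  Matrix.of fun xi yj =>
    if xi.1 = yj.1 then ∑ k, ∑ l, (Λ xi.1) k l * ρ (l, xi.2) (k, yj.2) else 0

/-- Unitarity for (possibly rectangular between index types) matrices. -/
def IsUnitaryMat {p q : Type*} [Fintype p] [Fintype q] [DecidableEq p] [DecidableEq q]
    (U : Matrix p q ℂ) : Prop :=
  U * Uᴴ = 1 ∧ Uᴴ * U = 1

/-! ### Auxiliary analytic lemmas -/

section Analytic
open Real

lemma aux_jensen_sum_log {ι : Type*} [Fintype ι] (w x : ι → ℝ)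
    (hw : ∀ i, 0 ≤ w i) (hx : ∀ i, 0 ≤ x i) (hwx : ∀ i, 0 < w i → 0 < x i) :
    ∑ i, w i * Real.log (x i / w i) ≤ (∑ i, w i) * Real.log ((∑ i, x i) / (∑ i, w i)) := by
  set W := ∑ i, w i with hW
  set X := ∑ i, x i with hX
  rcases eq_or_lt_of_le (Finset.sum_nonneg fun i _ => hw i : (0:ℝ) ≤ W) with h0 | hWpos
  · have hall : ∀ i ∈ Finset.univ, w i = 0 :=
      (Finset.sum_eq_zero_iff_of_nonneg (fun i _ => hw i)).mp h0.symm
    have : ∑ i, w i * Real.log (x i / w i) = 0 :=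
      Finset.sum_eq_zero fun i hi => by rw [hall i hi, zero_mul]
    rw [this, hW, ← h0, zero_mul]
  · have hXpos : 0 < X := by
      rcases eq_or_lt_of_le (Finset.sum_nonneg fun i _ => hx i : (0:ℝ) ≤ X) with h0 | h
      · exfalso
        have hallx : ∀ i ∈ Finset.univ, x i = 0 :=
          (Finset.sum_eq_zero_iff_of_nonneg (fun i _ => hx i)).mp h0.symm
        have : W = 0 := Finset.sum_eq_zero fun i hi => by
          by_contra hne
          have hwi : 0 < w i := lt_of_le_of_ne (hw i) (Ne.symm hne)
          exact absurd (hallx i hi) (ne_of_gt (hwx i hwi))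
        linarith
      · exact h
    have key : ∀ i, w i * Real.log (x i / w i) ≤ x i * W / X - w i + w i * Real.log (X / W) := by
      intro i
      rcases eq_or_lt_of_le (hw i) with h0 | hwi
      · rw [← h0]
        simp only [zero_mul, add_zero, sub_zero]
        exact div_nonneg (mul_nonneg (hx i) hWpos.le) hXpos.le
      · have hxi : 0 < x i := hwx i hwi
        have harg : 0 < x i * W / (w i * X) :=
          div_pos (mul_pos hxi hWpos) (mul_pos hwi hXpos)
        have hlog := Real.log_le_sub_one_of_pos harg
        have hsplit : Real.log (x i / w i) = Real.log (x i * W / (w i * X)) + Real.log (X / W) := by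
          rw [← Real.log_mul (ne_of_gt harg) (ne_of_gt (div_pos hXpos hWpos))]
          congr 1
          field_simp
          ring
        rw [hsplit, mul_add]
        gcongr
        calc w i * Real.log (x i * W / (w i * X)) ≤ w i * (x i * W / (w i * X) - 1) := by
              exact mul_le_mul_of_nonneg_left hlog (hw i)
          _ = x i * W / X - w i := by field_simp
    calc ∑ i, w i * Real.log (x i / w i) ≤ ∑ i, (x i * W / X - w i + w i * Real.log (X / W)) :=
          Finset.sum_le_sum fun i _ => key i
      _ = W * Real.log (X / W) := by
          rw [Finset.sum_add_distrib, Finset.sum_sub_distrib, ← Finset.sum_div, ← Finset.sum_mul,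
            ← hX, ← hW, ← Finset.sum_mul]
          field_simp
          rw [← hW]; ring

lemma aux_binent_bound {b : ℝ} (hb0 : 0 ≤ b) (hb1 : b ≤ 1) :
    Real.negMulLog b + Real.negMulLog (1 - b) ≤ 1/4 + b * Real.log 4 := by
  have h4 : (0:ℝ) < Real.log 4 := Real.log_pos (by norm_num)
  rcases eq_or_lt_of_le hb0 with h0 | hbpos
  · simp [← h0, Real.negMulLog]
  rcases eq_or_lt_of_le hb1 with h1 | hblt
  · rw [h1]
    simp [Real.negMulLog]
    nlinarith
  have e1 : Real.negMulLog b ≤ 1/4 - b + b * Real.log 4 := by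
    have harg : 0 < 1 / (4 * b) := by positivity
    have := Real.log_le_sub_one_of_pos harg
    have hlog : Real.log (1 / (4 * b)) = - Real.log 4 - Real.log b := by
      rw [one_div, Real.log_inv, Real.log_mul (by norm_num) (ne_of_gt hbpos)]
      ring
    rw [hlog] at this
    have := mul_le_mul_of_nonneg_left this hb0
    rw [Real.negMulLog]
    have hb' : b * (1 / (4*b) - 1) = 1/4 - b := by field_simp
    nlinarith
  have e2 : Real.negMulLog (1 - b) ≤ b := by
    have h1b : 0 < 1 - b := by linarith
    have harg : 0 < 1 / (1 - b) := by positivity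
    have := Real.log_le_sub_one_of_pos harg
    have hlog : Real.log (1 / (1 - b)) = - Real.log (1 - b) := by
      rw [one_div, Real.log_inv]
    rw [hlog] at this
    have := mul_le_mul_of_nonneg_left this h1b.le
    rw [Real.negMulLog]
    have : (1-b) * (1/(1-b) - 1) = b := by field_simp; ring
    nlinarith [mul_le_mul_of_nonneg_left (Real.log_le_sub_one_of_pos harg) h1b.le]
  linarith

lemma aux_classical_entropy_bound {ι : Type*} [Fintype ι] {p g : ℕ} (hp : 2 ≤ p) (hg : 1 ≤ g)
    (q c : ι → ℝ) (hq0 : ∀ f, 0 ≤ q f) (hq1 : ∑ f, q f = 1)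
    (hc0 : ∀ f, 0 ≤ c f) (hc1 : ∀ f, c f ≤ 1) (hcsum : ∑ f, c f = (g : ℝ))
    (hcsum' : ∑ f, (1 - c f) = ((g : ℝ) * (p - 1))) :
    Real.log p + ∑ f, Real.negMulLog (q f) ≤
      Real.log ((p : ℝ) * g) + 1/4 + 2 * (∑ f, q f * (1 - c f)) * Real.log p := by
  have hpR : (1:ℝ) < (p:ℝ) := by exact_mod_cast Nat.lt_of_lt_of_le one_lt_two hp
  have hgR : (0:ℝ) < (g:ℝ) := by exact_mod_cast hg
  set a : ℝ := ∑ f, q f * c f with ha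
  set b : ℝ := ∑ f, q f * (1 - c f) with hb
  have hab : a + b = 1 := by
    rw [ha, hb, ← Finset.sum_add_distrib]
    simpa [mul_sub] using hq1
  have ha0 : 0 ≤ a := Finset.sum_nonneg fun f _ => mul_nonneg (hq0 f) (hc0 f)
  have hb0 : 0 ≤ b := Finset.sum_nonneg fun f _ => mul_nonneg (hq0 f) (by linarith [hc1 f])
  have ha1 : a ≤ 1 := by linarith
  have hb1 : b ≤ 1 := by linarith
  have hsplit : ∑ f, Real.negMulLog (q f) =
      (∑ f, c f * Real.negMulLog (q f)) + ∑ f, (1 - c f) * Real.negMulLog (q f) := by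
    rw [← Finset.sum_add_distrib]
    congr 1; funext f; ring
  have hA : ∑ f, c f * Real.negMulLog (q f) ≤ a * Real.log ((g:ℝ) / a) := by
    have := aux_jensen_sum_log (fun f => q f * c f) c
      (fun f => mul_nonneg (hq0 f) (hc0 f)) hc0
      (fun f hf => (hc0 f).lt_of_ne (fun h => by simp [← h] at hf))
    rw [hcsum] at this
    refine le_trans (le_of_eq ?_) this
    apply Finset.sum_congr rfl
    intro f _
    rcases eq_or_lt_of_le (hc0 f) with h0 | hc
    · simp [← h0]
    rcases eq_or_lt_of_le (hq0 f) with h0 | hq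
    · simp [← h0, Real.negMulLog]
    rw [Real.negMulLog]
    rw [show c f / (q f * c f) = (q f)⁻¹ by
      rw [mul_comm (q f) (c f), ← div_div, div_self (ne_of_gt hc), one_div]]
    rw [Real.log_inv]; ring
  have hB : ∑ f, (1 - c f) * Real.negMulLog (q f) ≤ b * Real.log ((g:ℝ) * (p-1) / b) := by
    have := aux_jensen_sum_log (fun f => q f * (1 - c f)) (fun f => 1 - c f)
      (fun f => mul_nonneg (hq0 f) (by linarith [hc1 f]))
      (fun f => by show (0:ℝ) ≤ 1 - c f; linarith [hc1 f])
      (fun f hf => by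
        show (0:ℝ) < 1 - c f
        rcases lt_or_ge (c f) 1 with h | h
        · linarith
        · exfalso; have hcf : c f = 1 := le_antisymm (hc1 f) h
          simp [hcf] at hf)
    rw [hcsum'] at this
    refine le_trans (le_of_eq ?_) this
    apply Finset.sum_congr rfl
    intro f _
    rcases eq_or_lt_of_le (hc1 f) with h1 | hc
    · simp [h1]
    rcases eq_or_lt_of_le (hq0 f) with h0 | hq
    · simp [← h0, Real.negMulLog]
    have h1c : 0 < 1 - c f := by linarith
    rw [Real.negMulLog]
    rw [show (1 - c f) / (q f * (1 - c f)) = (q f)⁻¹ by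
      rw [mul_comm (q f) (1 - c f), ← div_div, div_self (ne_of_gt h1c), one_div]]
    rw [Real.log_inv]; ring
  have hAexp : a * Real.log ((g:ℝ) / a) ≤ a * Real.log g + Real.negMulLog a := by
    rcases eq_or_lt_of_le ha0 with h0 | hapos
    · simp [← h0, Real.negMulLog]
    rw [Real.log_div (ne_of_gt hgR) (ne_of_gt hapos), Real.negMulLog]
    ring_nf
    exact le_refl _
  have hBexp : b * Real.log ((g:ℝ) * (p-1) / b) ≤
      b * Real.log g + b * Real.log ((p:ℝ) - 1) + Real.negMulLog b := by
    rcases eq_or_lt_of_le hb0 with h0 | hbpos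
    · simp [← h0, Real.negMulLog]
    have hp1 : (0:ℝ) < (p:ℝ) - 1 := by linarith
    rw [Real.log_div (ne_of_gt (by positivity)) (ne_of_gt hbpos),
      Real.log_mul (ne_of_gt hgR) (ne_of_gt hp1), Real.negMulLog]
    ring_nf
    exact le_refl _
  have hptrick : b * Real.log ((p:ℝ) - 1) + b * Real.log 4 ≤ 2 * b * Real.log p := by
    have hp1 : (0:ℝ) < (p:ℝ) - 1 := by linarith
    have h1 : b * Real.log ((p:ℝ)-1) + b * Real.log 4 = b * Real.log (4 * ((p:ℝ)-1)) := by
      rw [Real.log_mul (by norm_num) (ne_of_gt hp1)]; ring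
    have h2 : Real.log (4 * ((p:ℝ)-1)) ≤ Real.log ((p:ℝ)^2) := by
      apply Real.log_le_log (by positivity)
      nlinarith [sq_nonneg ((p:ℝ) - 2)]
    rw [h1]
    calc b * Real.log (4 * ((p:ℝ)-1)) ≤ b * Real.log ((p:ℝ)^2) :=
          mul_le_mul_of_nonneg_left h2 hb0
      _ = 2 * b * Real.log p := by rw [Real.log_pow]; push_cast; ring
  have hasub : a = 1 - b := by linarith
  have hlogg : Real.log ((p:ℝ) * g) = Real.log p + Real.log g := by
    rw [Real.log_mul (by positivity) (ne_of_gt hgR)]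
  have halogg : a * Real.log g + b * Real.log g = Real.log g := by
    rw [← add_mul, hab, one_mul]
  rw [hsplit, hlogg]
  have hbin := aux_binent_bound hb0 hb1
  rw [← hasub] at hbin
  nlinarith [hA.trans hAexp, hB.trans hBexp]

end Analytic

/-! ### Auxiliary matrix lemmas -/

section MatrixAux
variable {m : Type*} [Fintype m] [DecidableEq m]

lemma aux_psd_diag {A : Matrix m m ℂ} (hA : A.PosSemidef) (i : m) :
    0 ≤ (A i i).re ∧ (A i i).im = 0 := by
  have h := hA.diag_nonneg (i := i)
  rw [Complex.le_def] at h
  exact ⟨h.1, h.2.symm⟩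

lemma aux_herm_idem_psd {T : Matrix m m ℂ} (hh : Tᴴ = T) (hi : T * T = T) : T.PosSemidef := by
  have h : T = Tᴴ * T := by rw [hh, hi]
  rw [h]; exact posSemidef_conjTranspose_mul_self T

lemma aux_diag_unit {T : Matrix m m ℂ} (hh : Tᴴ = T) (hi : T * T = T) (i : m) :
    0 ≤ (T i i).re ∧ (T i i).re ≤ 1 ∧ (T i i).im = 0 := by
  have h1 := aux_psd_diag (aux_herm_idem_psd hh hi) i
  have hh' : (1 - T)ᴴ = 1 - T := by rw [conjTranspose_sub, conjTranspose_one, hh]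
  have hi' : (1 - T) * (1 - T) = 1 - T := by
    simp only [sub_mul, mul_sub, one_mul, mul_one, hi]
    abel
  have h2 := aux_psd_diag (aux_herm_idem_psd hh' hi') i
  simp only [Matrix.sub_apply, one_apply_eq, Complex.sub_re, Complex.one_re] at h2
  exact ⟨h1.1, by linarith [h2.1], h1.2⟩

lemma aux_trace_hcfc {A : Matrix m m ℂ} (hA : A.IsHermitian) (f : ℝ → ℝ) :
    (hA.cfc f).trace = ∑ i, ((f (hA.eigenvalues i) : ℝ) : ℂ) := by
  rw [IsHermitian.cfc, Unitary.conjStarAlgAut_apply, Matrix.trace_mul_cycle, Unitary.coe_star_mul_self,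
    Matrix.one_mul, Matrix.trace_diagonal]
  simp

lemma aux_traceNorm_hermitian {D : Matrix m m ℂ} (hD : D.IsHermitian) :
    traceNorm D = ∑ i, |hD.eigenvalues i| := by
  have e : traceNorm D = ((isHermitian_conjTranspose_mul_self D).cfc Real.sqrt).trace.re := rfl
  rw [e, ← (isHermitian_conjTranspose_mul_self D).cfc_eq Real.sqrt]
  have hDD : Dᴴ * D = D ^ 2 := by rw [hD.eq, sq]
  rw [hDD, ← cfc_comp_pow Real.sqrt 2 D (ha := (show IsSelfAdjoint D from hD)),
    hD.cfc_eq, aux_trace_hcfc]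
  simp [Complex.re_sum, Real.sqrt_sq_eq_abs]

lemma aux_traceNorm_nonneg (A : Matrix m m ℂ) : 0 ≤ traceNorm A := by
  have e : traceNorm A = ((isHermitian_conjTranspose_mul_self A).cfc Real.sqrt).trace.re := rfl
  rw [e, aux_trace_hcfc, Complex.re_sum]
  exact Finset.sum_nonneg fun i _ => by simp [Real.sqrt_nonneg]

lemma aux_trace_sandwich {α β : Type*} [Fintype α] [Fintype β]
    (B : Matrix α β ℂ) (A : Matrix β β ℂ) (E : Matrix α α ℂ) :
    Matrix.trace (B * A * Bᴴ * E) = Matrix.trace (A * (Bᴴ * E * B)) := by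
  rw [Matrix.trace_mul_comm (B * A * Bᴴ) E, ← Matrix.mul_assoc,
    Matrix.trace_mul_comm (E * (B * A)) Bᴴ, ← Matrix.mul_assoc, ← Matrix.mul_assoc,
    Matrix.trace_mul_comm (Bᴴ * E * B) A]

end MatrixAux

section TPowAux
variable {d n : ℕ}

lemma aux_tpow_mul (A B : Matrix (Fin d) (Fin d) ℂ) :
    tpow A n * tpow B n = tpow (A * B) n := by
  ext f g
  simp only [tpow, Matrix.mul_apply, Matrix.of_apply]
  simp only [← Finset.prod_mul_distrib]
  rw [← Fintype.piFinset_univ, ← Finset.prod_univ_sum (fun _ => Finset.univ)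
    (fun i k => A (f i) k * B k (g i))]

lemma aux_tpow_one : tpow (1 : Matrix (Fin d) (Fin d) ℂ) n = 1 := by
  ext f g
  simp only [tpow, Matrix.of_apply]
  by_cases h : f = g
  · subst h; simp [Matrix.one_apply]
  · rw [Matrix.one_apply_ne h]
    obtain ⟨i, hi⟩ := Function.ne_iff.mp h
    exact Finset.prod_eq_zero (Finset.mem_univ i) (Matrix.one_apply_ne hi)

lemma aux_tpow_conjTranspose (A : Matrix (Fin d) (Fin d) ℂ) :
    (tpow A n)ᴴ = tpow Aᴴ n := by
  ext f g
  simp [tpow, Matrix.conjTranspose_apply, map_prod]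

lemma aux_tpow_diagonal (w : Fin d → ℂ) :
    tpow (diagonal w) n = diagonal (fun f => ∏ i, w (f i)) := by
  ext f g
  by_cases h : f = g
  · subst h; simp [tpow, Matrix.diagonal_apply_eq]
  · rw [Matrix.diagonal_apply_ne _ h]
    obtain ⟨i, hi⟩ := Function.ne_iff.mp h
    exact Finset.prod_eq_zero (Finset.mem_univ i) (Matrix.diagonal_apply_ne _ hi)

lemma aux_sum_prod_eq_one {lam : Fin d → ℝ} (h1 : ∑ i, lam i = 1) :
    ∑ f : Fin n → Fin d, (∏ i, lam (f i)) = 1 := by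
  rw [← Fintype.piFinset_univ, ← Finset.prod_univ_sum (fun _ => Finset.univ)
    (fun _ k => lam k)]
  simp [h1]

lemma aux_sum_negMulLog_prod {lam : Fin d → ℝ} (h1 : ∑ i, lam i = 1) :
    ∀ n : ℕ, ∑ f : Fin n → Fin d, Real.negMulLog (∏ i, lam (f i)) =
      n * ∑ k, Real.negMulLog (lam k) := by
  intro n
  induction n with
  | zero => simp
  | succ n ih =>
    rw [← (Fin.consEquiv (fun _ : Fin (n+1) => Fin d)).sum_comp
      (fun f => Real.negMulLog (∏ i, lam (f i)))]
    rw [Fintype.sum_prod_type]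
    have hterm : ∀ (k : Fin d) (f : Fin n → Fin d),
        Real.negMulLog (∏ i : Fin (n+1), lam ((Fin.consEquiv (fun _ => Fin d)) (k, f) i)) =
        (∏ i, lam (f i)) * Real.negMulLog (lam k) +
          lam k * Real.negMulLog (∏ i, lam (f i)) := by
      intro k f
      have : (∏ i : Fin (n+1), lam ((Fin.consEquiv (fun _ => Fin d)) (k, f) i)) =
          lam k * ∏ i, lam (f i) := by
        rw [Fin.prod_univ_succ]
        simp [Fin.consEquiv]
      rw [this, Real.negMulLog_mul]
    calc ∑ k, ∑ f : Fin n → Fin d,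
          Real.negMulLog (∏ i : Fin (n+1), lam ((Fin.consEquiv (fun _ => Fin d)) (k, f) i))
        = ∑ k, ∑ f : Fin n → Fin d, ((∏ i, lam (f i)) * Real.negMulLog (lam k) +
            lam k * Real.negMulLog (∏ i, lam (f i))) := by
          apply Finset.sum_congr rfl; intro k _; apply Finset.sum_congr rfl; intro f _
          exact hterm k f
      _ = ∑ k, ((∑ f : Fin n → Fin d, ∏ i, lam (f i)) * Real.negMulLog (lam k) +
            lam k * (∑ f : Fin n → Fin d, Real.negMulLog (∏ i, lam (f i)))) := by
          apply Finset.sum_congr rfl; intro k _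
          rw [Finset.sum_add_distrib, ← Finset.sum_mul, ← Finset.mul_sum]
      _ = (∑ k, Real.negMulLog (lam k)) +
            (∑ k, lam k) * ((n : ℝ) * ∑ k, Real.negMulLog (lam k)) := by
          rw [aux_sum_prod_eq_one h1, ih]
          simp only [one_mul]
          rw [Finset.sum_add_distrib, ← Finset.sum_mul]
      _ = (↑(n + 1)) * ∑ k, Real.negMulLog (lam k) := by
          rw [h1]; push_cast; ring

end TPowAux

lemma aux_trace_kron_ptrace {a b : Type*} [Fintype a] [Fintype b] [DecidableEq a] [DecidableEq b]
    (σ : Matrix (a × b) (a × b) ℂ) (P : Matrix a a ℂ) :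
    Matrix.trace (σ * (P ⊗ₖ (1 : Matrix b b ℂ))) = Matrix.trace (ptraceSnd σ * P) := by
  have hdiag : ∀ (x : a × b), (σ * (P ⊗ₖ (1 : Matrix b b ℂ))) x x =
      ∑ j : a, σ x (j, x.2) * P j x.1 := by
    intro x
    rw [Matrix.mul_apply, Fintype.sum_prod_type]
    apply Finset.sum_congr rfl
    intro j _
    simp [Matrix.one_apply, mul_ite, Finset.sum_ite_eq']
  rw [Matrix.trace, Matrix.trace]
  simp only [Matrix.diag]
  calc ∑ x : a × b, (σ * (P ⊗ₖ (1 : Matrix b b ℂ))) x x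
      = ∑ x : a × b, ∑ j : a, σ x (j, x.2) * P j x.1 :=
        Finset.sum_congr rfl fun x _ => hdiag x
    _ = ∑ i : a, ∑ k : b, ∑ j : a, σ (i, k) (j, k) * P j i := by
        rw [Fintype.sum_prod_type]
    _ = ∑ i : a, (ptraceSnd σ * P) i i := by
        apply Finset.sum_congr rfl
        intro i _
        rw [Matrix.mul_apply, Finset.sum_comm]
        apply Finset.sum_congr rfl
        intro j _
        rw [ptraceSnd, Matrix.of_apply, Finset.sum_mul]

lemma aux_trace_ptraceSnd {a b : Type*} [Fintype a] [Fintype b]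
    (σ : Matrix (a × b) (a × b) ℂ) :
    Matrix.trace (ptraceSnd σ) = Matrix.trace σ := by
  rw [Matrix.trace, Matrix.trace]
  simp only [Matrix.diag, ptraceSnd, Matrix.of_apply]
  rw [Fintype.sum_prod_type]


lemma aux_conj_herm {α β : Type*} [Fintype α] [Fintype β] [DecidableEq α] [DecidableEq β]
    (B : Matrix α β ℂ) (A : Matrix α α ℂ) (hA : Aᴴ = A) :
    (Bᴴ * A * B)ᴴ = Bᴴ * A * B := by
  rw [Matrix.conjTranspose_mul, Matrix.conjTranspose_mul, hA,
    Matrix.conjTranspose_conjTranspose, Matrix.mul_assoc]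

lemma aux_conj_idem {α β : Type*} [Fintype α] [Fintype β] [DecidableEq α] [DecidableEq β]
    (B : Matrix α β ℂ) (hB : B * Bᴴ = 1) (A : Matrix α α ℂ) (hA : A * A = A) :
    (Bᴴ * A * B) * (Bᴴ * A * B) = Bᴴ * A * B := by
  calc (Bᴴ * A * B) * (Bᴴ * A * B) = Bᴴ * (A * ((B * Bᴴ) * (A * B))) := by
        simp only [Matrix.mul_assoc]
    _ = Bᴴ * (A * (A * B)) := by rw [hB, Matrix.one_mul]
    _ = Bᴴ * ((A * A) * B) := by rw [← Matrix.mul_assoc A A B]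
    _ = Bᴴ * A * B := by rw [hA, ← Matrix.mul_assoc]

lemma aux_kron_conjTranspose {a b : Type*} [Fintype a] [Fintype b]
    (A : Matrix a a ℂ) (B : Matrix b b ℂ) :
    (Matrix.kroneckerMap (· * ·) A B)ᴴ = Matrix.kroneckerMap (· * ·) Aᴴ Bᴴ := by
  ext x y
  simp only [Matrix.conjTranspose_apply, Matrix.kroneckerMap_apply, star_mul']

lemma aux_final_numeric {n p dA : ℕ} (Hn ε : ℝ) (hn : (0:ℝ) < (n:ℝ))
    (hkey : Real.log (p:ℝ) ≤
      (n:ℝ) * Real.log dA - (n:ℝ) * Hn + Real.log 2 / Real.exp 1 + ε * ((n:ℝ) * Real.log dA)) :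
    (1 / n : ℝ) * Real.logb 2 p ≤
      Real.logb 2 dA - Hn / Real.log 2 + 1 / (Real.exp 1 * n) + ε * Real.logb 2 dA := by
  have hlog2 : (0:ℝ) < Real.log 2 := Real.log_pos one_lt_two
  have hnlog2 : (0:ℝ) < (n:ℝ) * Real.log 2 := by positivity
  have hl2ne : Real.log 2 ≠ 0 := ne_of_gt hlog2
  have hnne : (n:ℝ) ≠ 0 := ne_of_gt hn
  have hexpne : Real.exp 1 ≠ 0 := (Real.exp_pos 1).ne'
  calc (1 / n : ℝ) * Real.logb 2 p = Real.log (p:ℝ) / ((n:ℝ) * Real.log 2) := by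
        simp only [Real.logb]
        field_simp
      _ ≤ ((n:ℝ) * Real.log dA - (n:ℝ) * Hn + Real.log 2 / Real.exp 1 +
            ε * ((n:ℝ) * Real.log dA)) / ((n:ℝ) * Real.log 2) :=
        (div_le_div_iff_of_pos_right hnlog2).mpr hkey
      _ = Real.logb 2 dA - Hn / Real.log 2 + 1 / (Real.exp 1 * n) + ε * Real.logb 2 dA := by
        simp only [Real.logb]
        field_simp

set_option maxHeartbeats 1000000 in
theorem purity_concentration_converse {dA n p g : ℕ} (hn : 0 < n)
    (ρ : Matrix (Fin dA) (Fin dA) ℂ) (hρ : IsDensity ρ) (ε : ℝ)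
    (U : Matrix (Fin p × Fin g) (Fin n → Fin dA) ℂ) (hU : IsUnitaryMat U)
    (v : Fin p → ℂ) (hv : star v ⬝ᵥ v = 1)
    (hclose : traceNorm (ptraceSnd (U * tpow ρ n * Uᴴ) - proj v) ≤ ε) :
    (1 / n : ℝ) * Real.logb 2 p ≤
      Real.logb 2 dA - vnEntropy ρ + 1 / (Real.exp 1 * n) + ε * Real.logb 2 dA := by
  classical
  obtain ⟨hpsd, htr⟩ := hρ
  have herm : ρ.IsHermitian := hpsd.1
  set lam : Fin dA → ℝ := herm.eigenvalues with hlamdef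
  have hlam0 : ∀ i, 0 ≤ lam i := fun i => hpsd.eigenvalues_nonneg i
  set W : Matrix (Fin dA) (Fin dA) ℂ := (herm.eigenvectorUnitary : Matrix (Fin dA) (Fin dA) ℂ)
    with hWdef
  have hWW : W * Wᴴ = 1 := by
    simpa [star_eq_conjTranspose] using (Unitary.mem_iff.mp herm.eigenvectorUnitary.2).2
  have hWW' : Wᴴ * W = 1 := by
    simpa [star_eq_conjTranspose] using (Unitary.mem_iff.mp herm.eigenvectorUnitary.2).1
  have hspec : ρ = W * diagonal (Complex.ofReal ∘ lam) * Wᴴ := by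
    have := herm.spectral_theorem
    rw [Unitary.conjStarAlgAut_apply] at this
    exact this
  have hlamtr : Matrix.trace ρ = ∑ i, (lam i : ℂ) := by
    refine (congrArg Matrix.trace hspec).trans ?_
    rw [Matrix.trace_mul_cycle, hWW', Matrix.one_mul, Matrix.trace_diagonal]
    simp
  have hlam1 : ∑ i, lam i = 1 := by
    have h : ((∑ i, lam i : ℝ) : ℂ) = ((1:ℝ) : ℂ) := by
      push_cast
      rw [← hlamtr, htr]
    exact_mod_cast h
  have hdA1 : 1 ≤ dA := by
    by_contra h
    push_neg at h
    have hdA0 : dA = 0 := by omega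
    subst hdA0
    rw [Matrix.trace] at htr
    simp at htr
  have hcardeq : dA ^ n = p * g := by
    have t1 : Matrix.trace (U * Uᴴ) = Matrix.trace (Uᴴ * U) := Matrix.trace_mul_comm U Uᴴ
    rw [hU.1, hU.2, Matrix.trace_one, Matrix.trace_one] at t1
    have t2 : Fintype.card (Fin p × Fin g) = Fintype.card (Fin n → Fin dA) := by
      exact_mod_cast t1
    simp only [Fintype.card_prod, Fintype.card_fun, Fintype.card_fin] at t2
    omega
  have hdApow : 1 ≤ dA ^ n := Nat.one_le_pow _ _ (by omega)
  have hg1 : 1 ≤ g := by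
    rcases Nat.eq_zero_or_pos g with h | h
    · rw [h, Nat.mul_zero] at hcardeq; omega
    · exact h
  have hp1 : 1 ≤ p := by
    rcases Nat.eq_zero_or_pos p with h | h
    · rw [h, Nat.zero_mul] at hcardeq; omega
    · exact h
  have hε0 : 0 ≤ ε := le_trans (aux_traceNorm_nonneg _) hclose
  set Hn : ℝ := ∑ i, Real.negMulLog (lam i) with hHndef
  have hlog2 : (0:ℝ) < Real.log 2 := Real.log_pos one_lt_two
  have hnR : (0:ℝ) < (n:ℝ) := by exact_mod_cast hn
  have hdAR : (1:ℝ) ≤ (dA:ℝ) := by exact_mod_cast hdA1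
  have hlogdA0 : 0 ≤ Real.log dA := Real.log_nonneg hdAR
  have hvn : vnEntropy ρ = Hn / Real.log 2 := by
    rw [vnEntropy, dif_pos herm, hHndef, Finset.sum_div, ← Finset.sum_neg_distrib]
    apply Finset.sum_congr rfl
    intro i _
    rw [Real.negMulLog, Real.logb]
    ring
  have hquarter : (1:ℝ)/4 ≤ Real.log 2 / Real.exp 1 := by
    rw [le_div_iff₀ (Real.exp_pos 1)]
    nlinarith [Real.exp_one_lt_d9, Real.log_two_gt_d9]
  rcases Nat.lt_or_ge p 2 with hp2 | hp2
  -- trivial case p = 1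
  · have hpeq : p = 1 := by omega
    subst hpeq
    have hLHS : (1 / n : ℝ) * Real.logb 2 ((1:ℕ):ℝ) = 0 := by simp
    rw [hLHS]
    have hmaxent : Hn ≤ Real.log dA := by
      have hj := aux_jensen_sum_log lam (fun _ => (1:ℝ)) hlam0 (fun _ => zero_le_one)
        (fun i _ => one_pos)
      rw [hlam1] at hj
      have hsum1 : ∑ _i : Fin dA, (1:ℝ) = (dA:ℝ) := by simp
      rw [hsum1] at hj
      simp only [one_mul, div_one] at hj
      refine le_trans (le_of_eq ?_) hj
      rw [hHndef]
      apply Finset.sum_congr rfl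
      intro i _
      rcases eq_or_lt_of_le (hlam0 i) with h0 | hpos
      · simp [← h0, Real.negMulLog]
      · rw [Real.negMulLog, one_div, Real.log_inv]; ring
    have h1 : vnEntropy ρ ≤ Real.logb 2 dA := by
      rw [hvn, Real.logb]
      exact (div_le_div_iff_of_pos_right hlog2).mpr hmaxent
    have h2 : 0 < 1 / (Real.exp 1 * (n:ℝ)) := by positivity
    have h3 : 0 ≤ ε * Real.logb 2 dA := by
      apply mul_nonneg hε0
      rw [Real.logb]
      positivity
    linarith
  -- main case p ≥ 2
  · set σM : Matrix (Fin p × Fin g) (Fin p × Fin g) ℂ := U * tpow ρ n * Uᴴ with hσdef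
    set V : Matrix (Fin n → Fin dA) (Fin n → Fin dA) ℂ := tpow W n with hVdef
    have hVV : V * Vᴴ = 1 := by
      rw [hVdef, aux_tpow_conjTranspose, aux_tpow_mul, hWW, aux_tpow_one]
    have hVV' : Vᴴ * V = 1 := by
      rw [hVdef, aux_tpow_conjTranspose, aux_tpow_mul, hWW', aux_tpow_one]
    set q : (Fin n → Fin dA) → ℝ := fun f => ∏ i, lam (f i) with hqdef
    have hq0 : ∀ f, 0 ≤ q f := fun f => Finset.prod_nonneg fun i _ => hlam0 (f i)
    have hq1 : ∑ f, q f = 1 := aux_sum_prod_eq_one hlam1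
    have hqH : ∑ f, Real.negMulLog (q f) = n * Hn := aux_sum_negMulLog_prod hlam1 n
    set Dq : Matrix (Fin n → Fin dA) (Fin n → Fin dA) ℂ :=
      diagonal (fun f => (q f : ℂ)) with hDqdef
    have htpowρ : tpow ρ n = V * Dq * Vᴴ := by
      calc tpow ρ n = tpow (W * diagonal (Complex.ofReal ∘ lam) * Wᴴ) n := by rw [← hspec]
        _ = V * Dq * Vᴴ := by
            rw [← aux_tpow_mul, ← aux_tpow_mul, ← aux_tpow_conjTranspose, aux_tpow_diagonal,
              hVdef, hDqdef]
            congr 2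
            funext f
            simp [hqdef, Complex.ofReal_prod]
    set P : Matrix (Fin p) (Fin p) ℂ := proj v with hPdef
    have hPH : Pᴴ = P := by
      ext i j
      simp [hPdef, proj, Matrix.vecMulVec_apply, Matrix.conjTranspose_apply, mul_comm]
    have hvsum : ∑ k, star (v k) * v k = 1 := hv
    have hPP : P * P = P := by
      ext i j
      rw [Matrix.mul_apply]
      simp only [hPdef, proj, Matrix.vecMulVec_apply, Pi.star_apply]
      calc ∑ k, v i * star (v k) * (v k * star (v j))
          = (v i * star (v j)) * ∑ k, star (v k) * v k := by
            rw [Finset.mul_sum]; apply Finset.sum_congr rfl; intro k _; ring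
        _ = v i * star (v j) := by rw [hvsum, mul_one]
    have hPtr : Matrix.trace P = 1 := by
      rw [Matrix.trace, ← hvsum]
      apply Finset.sum_congr rfl
      intro k _
      simp [hPdef, proj, Matrix.vecMulVec_apply, Matrix.diag, mul_comm]
    set E : Matrix (Fin p × Fin g) (Fin p × Fin g) ℂ := P ⊗ₖ (1 : Matrix (Fin g) (Fin g) ℂ)
      with hEdef
    have hEH : Eᴴ = E := by
      rw [hEdef, aux_kron_conjTranspose, hPH, Matrix.conjTranspose_one]
    have hEE : E * E = E := by
      rw [hEdef, ← Matrix.mul_kronecker_mul, hPP, Matrix.one_mul]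
    have hEtr : Matrix.trace E = (g : ℂ) := by
      rw [hEdef, Matrix.trace_kronecker, hPtr, Matrix.trace_one]
      simp
    set M : Matrix (Fin n → Fin dA) (Fin n → Fin dA) ℂ := Uᴴ * E * U with hMdef
    have hMH : Mᴴ = M := by
      rw [hMdef]; exact aux_conj_herm U E hEH
    have hMM : M * M = M := by
      rw [hMdef]; exact aux_conj_idem U hU.1 E hEE
    set T : Matrix (Fin n → Fin dA) (Fin n → Fin dA) ℂ := Vᴴ * M * V with hTdef
    have hTH : Tᴴ = T := by
      rw [hTdef]; exact aux_conj_herm V M hMH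
    have hTT : T * T = T := by
      rw [hTdef]; exact aux_conj_idem V hVV M hMM
    set c : (Fin n → Fin dA) → ℝ := fun f => (T f f).re with hcdef
    have hc0 : ∀ f, 0 ≤ c f := fun f => (aux_diag_unit hTH hTT f).1
    have hc1 : ∀ f, c f ≤ 1 := fun f => (aux_diag_unit hTH hTT f).2.1
    have htrT : Matrix.trace T = (g:ℂ) := by
      rw [hTdef, Matrix.trace_mul_cycle, hVV, Matrix.one_mul, hMdef,
        Matrix.trace_mul_cycle, hU.1, Matrix.one_mul, hEtr]
    have hcsum : ∑ f, c f = (g:ℝ) := by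
      have h1 : (Matrix.trace T).re = (g:ℝ) := by rw [htrT]; simp
      rw [← h1, Matrix.trace, Complex.re_sum]
      rfl
    -- the key trace identity
    have htraceE : Matrix.trace (σM * E) = ∑ f, (q f : ℂ) * T f f := by
      calc Matrix.trace (σM * E)
          = Matrix.trace (tpow ρ n * (Uᴴ * E * U)) := by
            rw [hσdef]; exact aux_trace_sandwich U (tpow ρ n) E
        _ = Matrix.trace (V * Dq * Vᴴ * M) := by rw [htpowρ, hMdef]
        _ = Matrix.trace (Dq * (Vᴴ * M * V)) := aux_trace_sandwich V Dq M
        _ = ∑ f, (q f : ℂ) * T f f := by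
            rw [← hTdef, hDqdef, Matrix.trace]
            apply Finset.sum_congr rfl
            intro f _
            rw [Matrix.diag]
            rw [Matrix.diagonal_mul]
    have ha_eq : ∑ f, q f * c f = (Matrix.trace (ptraceSnd σM * P)).re := by
      rw [← aux_trace_kron_ptrace σM P, ← hEdef, htraceE, Complex.re_sum]
      apply Finset.sum_congr rfl
      intro f _
      rw [Complex.re_ofReal_mul]
    -- the trace-distance bound
    set D : Matrix (Fin p) (Fin p) ℂ := ptraceSnd σM - P with hDdef
    have hσH : σMᴴ = σM := by
      have htpH : (tpow ρ n)ᴴ = tpow ρ n := by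
        rw [aux_tpow_conjTranspose, herm.eq]
      rw [hσdef, Matrix.conjTranspose_mul, Matrix.conjTranspose_mul, htpH,
        Matrix.conjTranspose_conjTranspose, Matrix.mul_assoc]
    have hptrH : (ptraceSnd σM)ᴴ = ptraceSnd σM := by
      ext i j
      have hσe : ∀ x y, (starRingEnd ℂ) (σM y x) = σM x y := by
        intro x y
        exact congrFun (congrFun hσH x) y
      simp only [Matrix.conjTranspose_apply, ptraceSnd, Matrix.of_apply]
      rw [star_sum]
      apply Finset.sum_congr rfl
      intro k _
      exact hσe (i, k) (j, k)
    have hDH : D.IsHermitian := by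
      show Dᴴ = D
      rw [hDdef, Matrix.conjTranspose_sub, hptrH, hPH]
    have htrσ : Matrix.trace σM = 1 := by
      have hcq : (∑ f : Fin n → Fin dA, ((q f : ℝ) : ℂ)) = 1 := by
        exact_mod_cast congrArg Complex.ofReal hq1
      rw [hσdef, Matrix.trace_mul_cycle, hU.2, Matrix.one_mul, htpowρ,
        Matrix.trace_mul_cycle, hVV', Matrix.one_mul, hDqdef, Matrix.trace_diagonal]
      exact hcq
    have htrD : Matrix.trace D = 0 := by
      rw [hDdef, Matrix.trace_sub, aux_trace_ptraceSnd, htrσ, hPtr, sub_self]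
    set dd : Fin p → ℝ := hDH.eigenvalues with hdddef
    set Wd : Matrix (Fin p) (Fin p) ℂ := (hDH.eigenvectorUnitary : Matrix (Fin p) (Fin p) ℂ)
      with hWddef
    have hWdWd : Wd * Wdᴴ = 1 := by
      simpa [star_eq_conjTranspose] using (Unitary.mem_iff.mp hDH.eigenvectorUnitary.2).2
    have hWdWd' : Wdᴴ * Wd = 1 := by
      simpa [star_eq_conjTranspose] using (Unitary.mem_iff.mp hDH.eigenvectorUnitary.2).1
    have hspecD : D = Wd * diagonal (Complex.ofReal ∘ dd) * Wdᴴ := by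
      have := hDH.spectral_theorem
      rw [Unitary.conjStarAlgAut_apply] at this
      exact this
    have hsumdd : ∑ i, dd i = 0 := by
      have h1 : Matrix.trace D = ∑ i, (dd i : ℂ) := by
        refine (congrArg Matrix.trace hspecD).trans ?_
        rw [Matrix.trace_mul_cycle, hWdWd', Matrix.one_mul, Matrix.trace_diagonal]
        simp
      have h2 : ((∑ i, dd i : ℝ) : ℂ) = ((0:ℝ) : ℂ) := by
        push_cast
        rw [← h1, htrD]
      exact_mod_cast h2
    have htnD : traceNorm D = ∑ i, |dd i| := aux_traceNorm_hermitian hDH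
    have hddsum_le : ∑ i, |dd i| ≤ ε := by rw [← htnD]; exact hclose
    set T' : Matrix (Fin p) (Fin p) ℂ := Wdᴴ * P * Wd with hT'def
    have hT'H : T'ᴴ = T' := by
      rw [hT'def]; exact aux_conj_herm Wd P hPH
    have hT'T : T' * T' = T' := by
      rw [hT'def]; exact aux_conj_idem Wd hWdWd P hPP
    set e : Fin p → ℝ := fun i => (T' i i).re with hedef
    have he0 : ∀ i, 0 ≤ e i := fun i => (aux_diag_unit hT'H hT'T i).1
    have he1 : ∀ i, e i ≤ 1 := fun i => (aux_diag_unit hT'H hT'T i).2.1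
    have htrDP : Matrix.trace (D * P) = ∑ i, (dd i : ℂ) * T' i i := by
      calc Matrix.trace (D * P)
          = Matrix.trace (Wd * diagonal (Complex.ofReal ∘ dd) * Wdᴴ * P) := by rw [← hspecD]
        _ = Matrix.trace (diagonal (Complex.ofReal ∘ dd) * (Wdᴴ * P * Wd)) :=
            aux_trace_sandwich Wd _ P
        _ = ∑ i, (dd i : ℂ) * T' i i := by
            rw [← hT'def, Matrix.trace]
            apply Finset.sum_congr rfl
            intro i _
            rw [Matrix.diag, Matrix.diagonal_mul]
            rfl
    have hDPre : -(ε/2) ≤ (Matrix.trace (D * P)).re := by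
      rw [htrDP, Complex.re_sum]
      have hterm : ∀ i, (dd i - |dd i|)/2 ≤ ((dd i : ℂ) * T' i i).re := by
        intro i
        rw [Complex.re_ofReal_mul]
        rcases le_or_gt 0 (dd i) with h | h
        · rw [abs_of_nonneg h]
          simp only [sub_self, zero_div]
          exact mul_nonneg h (he0 i)
        · rw [abs_of_neg h]
          have : dd i * e i ≥ dd i * 1 := by
            apply mul_le_mul_of_nonpos_left (he1 i) h.le
          linarith
      calc -(ε/2) ≤ (∑ i, dd i - ∑ i, |dd i|)/2 := by
            rw [hsumdd]
            simp only [zero_sub]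
            linarith [hddsum_le]
        _ = ∑ i, (dd i - |dd i|)/2 := by
            rw [← Finset.sum_sub_distrib, Finset.sum_div]
        _ ≤ ∑ i, ((dd i : ℂ) * T' i i).re := Finset.sum_le_sum fun i _ => hterm i
    have haLB : 1 - ε/2 ≤ ∑ f, q f * c f := by
      rw [ha_eq]
      have hsub : ptraceSnd σM * P = D * P + P * P := by
        rw [hDdef, sub_mul]
        abel
      rw [hsub, Matrix.trace_add, hPP, hPtr, Complex.add_re, Complex.one_re]
      linarith [hDPre]
    -- apply the classical entropy bound
    have hcsum' : ∑ f, (1 - c f) = (g:ℝ) * ((p:ℝ) - 1) := by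
      rw [Finset.sum_sub_distrib, hcsum, Finset.sum_const, Finset.card_univ, Fintype.card_fun,
        Fintype.card_fin, Fintype.card_fin, hcardeq]
      push_cast
      ring
    have hmain := aux_classical_entropy_bound hp2 hg1 q c hq0 hq1 hc0 hc1 hcsum hcsum'
    rw [hqH] at hmain
    set b : ℝ := ∑ f, q f * (1 - c f) with hbdef
    have hb_eq : b = 1 - ∑ f, q f * c f := by
      rw [hbdef]
      simp only [mul_sub, mul_one]
      rw [Finset.sum_sub_distrib, hq1]
    have h2b : 2 * b ≤ ε := by rw [hb_eq]; linarith [haLB]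
    have hb0' : 0 ≤ b := by
      rw [hbdef]
      exact Finset.sum_nonneg fun f _ => mul_nonneg (hq0 f) (by linarith [hc1 f])
    have hlogpg : Real.log ((p:ℝ) * (g:ℝ)) = n * Real.log dA := by
      have hcast : ((p:ℝ) * (g:ℝ)) = (dA:ℝ)^n := by
        have h := congrArg (fun k : ℕ => (k : ℝ)) hcardeq
        push_cast at h
        exact h.symm
      rw [hcast, Real.log_pow]
    have hlogp0 : 0 ≤ Real.log (p:ℝ) := Real.log_nonneg (by exact_mod_cast hp1)
    have hlogple : Real.log (p:ℝ) ≤ n * Real.log dA := by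
      rw [← hlogpg]
      apply Real.log_le_log (by exact_mod_cast Nat.lt_of_lt_of_le Nat.zero_lt_one hp1)
      have hgR : (1:ℝ) ≤ (g:ℝ) := by exact_mod_cast hg1
      have hpR : (0:ℝ) ≤ (p:ℝ) := by positivity
      nlinarith
    have hkey : Real.log (p:ℝ) ≤
        n * Real.log dA - n * Hn + Real.log 2 / Real.exp 1 + ε * (n * Real.log dA) := by
      have hstep : 2 * b * Real.log (p:ℝ) ≤ ε * (n * Real.log dA) := by
        calc 2 * b * Real.log (p:ℝ) ≤ ε * Real.log (p:ℝ) :=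
              mul_le_mul_of_nonneg_right h2b hlogp0
          _ ≤ ε * (n * Real.log dA) := mul_le_mul_of_nonneg_left hlogple hε0
      rw [hlogpg] at hmain
      linarith [hquarter]
    rw [hvn]
    exact aux_final_numeric Hn ε hnR hkey
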